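/- For all nonnegative integers n and k, ∑_{j=0}^{n} E_{k+j}(0) C(n, j) = (-1)^{n+k} ∑_{j=0}^{k} E_{n+j}(0) C(k, j), where C denotes binomial coefficients. -/

import Mathlib

/-- `E_m(0)`: the value of the `m`-th Euler polynomial at `0`.
`E_0(0) = 1` and `E_m(0) = 2(1 - 2^{m+1}) B_{m+1}/(m+1)` for `m ≥ 1`. -/
noncomputable def eulerAtZero : ℕ → ℝ
  | 0 => 1
  | m + 1 => 2 * (1 - 2 ^ (m + 2)) * ((bernoulli (m + 2) : ℚ) : ℝ) / (m + 2)

open Finset Nat PowerSeries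


noncomputable def gen (n : ℕ) : ℚ := 2 * (1 - 2 ^ n) * bernoulli n

lemma gen_zero : gen 0 = 0 := by simp [gen]

lemma genPowerSeries :
    (PowerSeries.mk fun n => (gen n / n ! : ℚ)) * (PowerSeries.exp ℚ + 1) = 2 * X := by
  have h2C : (2 : ℚ⟦X⟧) = C (R := ℚ) 2 := (map_ofNat (C (R := ℚ)) 2).symm
  have hG : (PowerSeries.mk fun n => (gen n / n ! : ℚ)) =
      2 * (bernoulliPowerSeries ℚ - rescale 2 (bernoulliPowerSeries ℚ)) := by
    ext n
    rw [h2C, PowerSeries.coeff_C_mul]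
    simp only [coeff_mk, bernoulliPowerSeries, map_sub, coeff_rescale, coeff_mk,
      Algebra.algebraMap_self, RingHom.id_apply]
    simp only [gen]
    ring
  have hexp : PowerSeries.exp ℚ - 1 ≠ 0 := by
    intro h
    have := congrArg (PowerSeries.coeff (R := ℚ) 1) h
    simp [PowerSeries.coeff_exp] at this
  apply mul_right_cancel₀ hexp
  have hsq := exp_pow_eq_rescale_exp (A := ℚ) 2
  norm_num at hsq
  have hresc : rescale (2:ℚ) (bernoulliPowerSeries ℚ * (PowerSeries.exp ℚ - 1)) =
      rescale 2 (bernoulliPowerSeries ℚ) * (rescale 2 (PowerSeries.exp ℚ) - 1) := by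
    rw [map_mul, map_sub, map_one]
  have hX : rescale (2 : ℚ) (X : ℚ⟦X⟧) = 2 * X := by
    ext n
    rw [h2C, PowerSeries.coeff_C_mul]
    simp only [coeff_rescale, PowerSeries.coeff_X]
    by_cases h : n = 1 <;> simp [h]
  calc (PowerSeries.mk fun n => (gen n / n ! : ℚ)) * (PowerSeries.exp ℚ + 1) *
        (PowerSeries.exp ℚ - 1)
      = 2 * ((bernoulliPowerSeries ℚ * (PowerSeries.exp ℚ - 1)) * (PowerSeries.exp ℚ + 1))
        - 2 * rescale 2 (bernoulliPowerSeries ℚ * (PowerSeries.exp ℚ - 1)) := by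
        rw [hG, hresc, ← hsq]
        ring
    _ = 2 * X * (PowerSeries.exp ℚ - 1) := by
        rw [bernoulliPowerSeries_mul_exp_sub_one, hX]
        ring

lemma gen_sum (n : ℕ) (hn : n ≠ 1) :
    ∑ i ∈ range (n + 1), (n.choose i : ℚ) * gen i = - gen n := by
  have h := genPowerSeries
  rw [mul_add, mul_one] at h
  have h2 := congrArg (PowerSeries.coeff (R := ℚ) n) h
  rw [map_add, PowerSeries.coeff_mul] at h2
  have hrhs : PowerSeries.coeff (R := ℚ) n ((2 : ℚ⟦X⟧) * X) = 0 := by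
    rw [show (2 : ℚ⟦X⟧) = PowerSeries.C (R := ℚ) 2 from (map_ofNat (PowerSeries.C (R := ℚ)) 2).symm,
      PowerSeries.coeff_C_mul, PowerSeries.coeff_X]
    simp [hn]
  rw [hrhs] at h2
  simp only [coeff_mk, PowerSeries.coeff_exp, Algebra.algebraMap_self, RingHom.id_apply] at h2
  rw [Finset.Nat.sum_antidiagonal_eq_sum_range_succ_mk] at h2
  -- h2 : ∑ k ∈ range (n+1), gen k / k ! * (1 / (n-k)!) + gen n / n ! = 0
  have hfac : (n ! : ℚ) ≠ 0 := by exact_mod_cast n.factorial_ne_zero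
  have key : ∀ i ∈ range (n + 1),
      (n.choose i : ℚ) * gen i = n ! * (gen i / i ! * (1 / (n - i)! : ℚ)) := by
    intro i hi
    rw [mem_range, Nat.lt_succ_iff] at hi
    rw [Nat.cast_choose ℚ hi]
    have h1 : (i ! : ℚ) ≠ 0 := by exact_mod_cast i.factorial_ne_zero
    have h2 : ((n - i)! : ℚ) ≠ 0 := by exact_mod_cast (n - i).factorial_ne_zero
    field_simp
  rw [Finset.sum_congr rfl key, ← Finset.mul_sum]
  have hsum : (∑ i ∈ range (n + 1), gen i / i ! * (1 / (n - i)! : ℚ)) = - (gen n / n !) := by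
    linarith [h2]
  rw [hsum]
  field_simp

noncomputable def aQ (n : ℕ) : ℚ := gen (n + 1) / (n + 1)

lemma aQ_even_zero (n : ℕ) (h : Even n) (hn : n ≠ 0) : aQ n = 0 := by
  have hb : bernoulli (n + 1) = 0 := by
    rw [bernoulli_eq_bernoulli'_of_ne_one (by omega)]
    exact bernoulli'_eq_zero_of_odd h.add_one (by omega)
  simp [aQ, gen, hb]

lemma sum_aQ (k : ℕ) :
    ∑ j ∈ range (k + 1), (k.choose j : ℚ) * aQ j = (-1) ^ k * aQ k := by
  rcases Nat.eq_zero_or_pos k with rfl | hk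
  · simp
  have hk1 : ((k : ℚ) + 1) ≠ 0 := by positivity
  have hmain : ∑ j ∈ range (k + 1), (k.choose j : ℚ) * aQ j = - aQ k := by
    have step : ∀ j, (k.choose j : ℚ) * aQ j = ((k+1).choose (j+1) : ℚ) * gen (j+1) / (k+1) := by
      intro j
      have hc : ((k : ℚ) + 1) * (k.choose j) = ((k+1).choose (j+1) : ℚ) * (j + 1) := by
        exact_mod_cast congrArg (Nat.cast : ℕ → ℚ) (Nat.add_one_mul_choose_eq k j)
      have hj1 : ((j : ℚ) + 1) ≠ 0 := by positivity
      rw [aQ, eq_div_iff hk1]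
      push_cast at hc ⊢
      field_simp
      linear_combination gen (j + 1) * hc
    rw [Finset.sum_congr rfl (fun j _ => step j)]
    rw [← Finset.sum_div]
    have hgs := gen_sum (k + 1) (by omega)
    rw [Finset.sum_range_succ' (fun i => ((k+1).choose i : ℚ) * gen i) (k+1)] at hgs
    rw [gen_zero, mul_zero, add_zero] at hgs
    rw [hgs, aQ]
    ring
  rcases Nat.even_or_odd k with he | ho
  · rw [hmain, aQ_even_zero k he (by omega)]
    simp
  · rw [hmain, Odd.neg_one_pow ho]
    ring

lemma pascalT (n k : ℕ) :
    ∑ j ∈ range (n + 2), aQ (k + j) * ((n+1).choose j : ℚ)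
      = ∑ j ∈ range (n + 1), aQ (k + j) * (n.choose j : ℚ)
        + ∑ j ∈ range (n + 1), aQ (k + 1 + j) * (n.choose j : ℚ) := by
  rw [Finset.sum_range_succ' (fun j => aQ (k + j) * ((n+1).choose j : ℚ)) (n+1)]
  have hstep : ∀ j ∈ range (n + 1), aQ (k + (j+1)) * (((n+1).choose (j+1) : ℕ) : ℚ)
      = aQ (k + 1 + j) * (n.choose j : ℚ) + aQ (k + (j+1)) * (n.choose (j+1) : ℚ) := by
    intro j _
    rw [Nat.choose_succ_succ]
    push_cast
    rw [show k + 1 + j = k + (j + 1) by ring]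
    ring
  rw [Finset.sum_congr rfl hstep, Finset.sum_add_distrib]
  rw [Finset.sum_range_succ (fun j => aQ (k + (j+1)) * ((n.choose (j+1) : ℕ) : ℚ)) n]
  rw [Nat.choose_succ_self]
  rw [Finset.sum_range_succ' (fun j => aQ (k + j) * ((n.choose j : ℕ) : ℚ)) n]
  simp only [Nat.choose_zero_right, Nat.cast_zero, Nat.cast_one, mul_zero, add_zero,
    Nat.add_zero, Nat.cast_ofNat, mul_one]
  ring

lemma mainQ (n k : ℕ) :
    ∑ j ∈ range (n + 1), aQ (k + j) * (n.choose j : ℚ)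
      = (-1) ^ (n + k) * ∑ j ∈ range (k + 1), aQ (n + j) * (k.choose j : ℚ) := by
  induction n generalizing k with
  | zero =>
    simp only [range_one, Finset.sum_singleton, Nat.choose_zero_right, Nat.cast_one, mul_one,
      Nat.add_zero, Nat.zero_add, Nat.zero_eq, zero_add]
    have h := sum_aQ k
    rw [Finset.sum_congr rfl (fun j _ => mul_comm (aQ j) ((k.choose j : ℚ))), h]
    rw [← mul_assoc, ← pow_add]
    have : (-1 : ℚ) ^ (k + k) = 1 := by
      rw [← two_mul, pow_mul]
      norm_num
    rw [this, one_mul]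
  | succ n ih =>
    rw [pascalT n k, ih k, ih (k + 1)]
    have h2 : ∑ j ∈ range (k + 2), aQ (n + j) * ((k+1).choose j : ℚ)
        = ∑ j ∈ range (k + 1), aQ (n + j) * (k.choose j : ℚ)
          + ∑ j ∈ range (k + 1), aQ (n + 1 + j) * (k.choose j : ℚ) := pascalT k n
    rw [show n + (k + 1) = (n + k) + 1 by ring, show n + 1 + k = (n + k) + 1 by ring,
      pow_succ, h2]
    ring

lemma euler_eq (m : ℕ) : eulerAtZero m = ((aQ m : ℚ) : ℝ) := by
  cases m with
  | zero =>
    simp [eulerAtZero, aQ, gen, bernoulli_one]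
    norm_num
  | succ m =>
    simp only [eulerAtZero, aQ, gen]
    push_cast
    ring


/-- For all nonnegative integers `n` and `k`,
`∑_{j=0}^{n} E_{k+j}(0) C(n,j) = (-1)^{n+k} ∑_{j=0}^{k} E_{n+j}(0) C(k,j)`. -/
theorem stmt8 (n k : ℕ) :
    ∑ j ∈ Finset.range (n + 1), eulerAtZero (k + j) * (n.choose j : ℝ) =
      (-1 : ℝ) ^ (n + k) * ∑ j ∈ Finset.range (k + 1), eulerAtZero (n + j) * (k.choose j : ℝ) := by
  have h := congrArg (fun q : ℚ => (q : ℝ)) (mainQ n k)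
  push_cast at h
  simpa only [euler_eq] using h
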